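/- (Chevalley estimate.) Let A₁,…,A_q ∈ ℝ⟦x₁,…,xₙ⟧ᵖ, let A : ℝ⟦x⟧^q → ℝ⟦x⟧ᵖ be the module homomorphism given by multiplication by the matrix with columns A₁,…,A_q, let M = Im A, and let R = Ker A (the submodule of relations among the columns of A). Let (α_i,j_i), i = 1,…,t, denote the vertices of the diagram of initial exponents 𝒩(M), and set λ := max_i |α_i|. Then for all l ∈ ℕ: A⁻¹(𝔪^{l+λ}·ℝ⟦x⟧ᵖ) ⊆ R + 𝔪^l·ℝ⟦x⟧^q, where 𝔪 = (x₁,…,xₙ) is the maximal ideal of ℝ⟦x⟧. -/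

import Mathlib

set_option maxHeartbeats 1000000


open Classical

/-- Index set `ℕⁿ × {1,…,p}` for coefficients of elements of `A⟦x₁,…,xₙ⟧ᵖ`. -/
abbrev Idx (n p : ℕ) := (Fin n →₀ ℕ) × Fin p

/-- Total degree `|α|` of a multiindex. -/
def degF {n : ℕ} (α : Fin n →₀ ℕ) : ℕ := ∑ i, α i

/-- Lexicographic order on multiindices. -/
def lexLT {n : ℕ} (α β : Fin n →₀ ℕ) : Prop :=
  ∃ i : Fin n, (∀ j, j < i → α j = β j) ∧ α i < β i

/-- The total order on `ℕⁿ × {1,…,p}` comparing `(|α|, j, α)` lexicographically. -/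
def idxLT {n p : ℕ} (a b : Idx n p) : Prop :=
  degF a.1 < degF b.1 ∨
    (degF a.1 = degF b.1 ∧ ((a.2 : ℕ) < (b.2 : ℕ) ∨ (a.2 = b.2 ∧ lexLT a.1 b.1)))

def idxLE {n p : ℕ} (a b : Idx n p) : Prop := idxLT a b ∨ a = b

/-- Support of `F ∈ A⟦x⟧ᵖ`. -/
def suppV {n p : ℕ} {A : Type} [Semiring A] (F : Fin p → MvPowerSeries (Fin n) A) :
    Set (Idx n p) :=
  {d | MvPowerSeries.coeff d.1 (F d.2) ≠ 0}

/-- `d` is the initial exponent `exp F` of `F`. -/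
def IsExpOf {n p : ℕ} {A : Type} [Semiring A] (F : Fin p → MvPowerSeries (Fin n) A)
    (d : Idx n p) : Prop :=
  d ∈ suppV F ∧ ∀ d' ∈ suppV F, idxLE d d'

/-- `S + ℕⁿ`, for `S ⊆ ℕⁿ × {1,…,p}`. -/
def setShift {n p : ℕ} (S : Set (Idx n p)) : Set (Idx n p) :=
  {d | ∃ s ∈ S, ∃ β : Fin n →₀ ℕ, d = (s.1 + β, s.2)}

/-- The diagram of initial exponents `𝒩(M) = {exp F : F ∈ M ∖ {0}}` of a submodule `M`
of `A⟦x⟧ᵖ`. -/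
def diagramOf {n p : ℕ} {A : Type} [CommRing A]
    (M : Submodule (MvPowerSeries (Fin n) A) (Fin p → MvPowerSeries (Fin n) A)) :
    Set (Idx n p) :=
  {d | ∃ F ∈ M, F ≠ 0 ∧ IsExpOf F d}

/-- `d` is a vertex of the diagram `𝒩`: `(𝒩 ∖ {d}) + ℕⁿ ≠ 𝒩`. -/
def IsVertex {n p : ℕ} (𝒩 : Set (Idx n p)) (d : Idx n p) : Prop :=
  setShift (𝒩 \ {d}) ≠ 𝒩

/-- `(α_i, j_i) + ℕⁿ`. -/
def DeltaFull {n p q : ℕ} (e : Fin q → Idx n p) (i : Fin q) : Set (Idx n p) :=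
  {d | d.2 = (e i).2 ∧ ∃ β : Fin n →₀ ℕ, d.1 = (e i).1 + β}

/-- The sets `Δ_i` of Hironaka's division: `Δ_i = ((α_i,j_i) + ℕⁿ) ∖ (Δ_1 ∪ ⋯ ∪ Δ_{i−1})`. -/
def Delta {n p q : ℕ} (e : Fin q → Idx n p) (i : Fin q) : Set (Idx n p) :=
  DeltaFull e i \ ⋃ (k : Fin q) (hk : k < i), Delta e k
termination_by i.val
decreasing_by exact hk

/-- The complementary region `Δ = ℕⁿ×{1,…,p} ∖ (Δ_1 ∪ ⋯ ∪ Δ_q)`. -/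
def DeltaC {n p q : ℕ} (e : Fin q → Idx n p) : Set (Idx n p) :=
  (⋃ i : Fin q, Delta e i)ᶜ

-- sanity checks for instances used later


-- basics
lemma degF_add {n : ℕ} (α β : Fin n →₀ ℕ) : degF (α + β) = degF α + degF β := by
  simp [degF, Finsupp.add_apply, Finset.sum_add_distrib]

lemma degF_eq_zero {n : ℕ} {α : Fin n →₀ ℕ} (h : degF α = 0) : α = 0 := by
  ext i
  have := Finset.sum_eq_zero_iff.mp h i (Finset.mem_univ i)
  simpa using this

lemma apply_le_degF {n : ℕ} (α : Fin n →₀ ℕ) (i : Fin n) : α i ≤ degF α :=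
  Finset.single_le_sum (fun _ _ => Nat.zero_le _) (Finset.mem_univ i)

lemma lexLT_trichot {n : ℕ} {α β : Fin n →₀ ℕ} (h : α ≠ β) : lexLT α β ∨ lexLT β α := by
  have hne : (Finset.univ.filter (fun i => α i ≠ β i)).Nonempty := by
    by_contra hempty
    apply h
    ext i
    by_contra hi
    exact hempty ⟨i, Finset.mem_filter.2 ⟨Finset.mem_univ i, hi⟩⟩
  set s := Finset.univ.filter (fun i => α i ≠ β i)
  let i := s.min' hne
  have himem : i ∈ s := s.min'_mem hne
  have hine : α i ≠ β i := (Finset.mem_filter.1 himem).2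
  have hlow : ∀ j, j < i → α j = β j := by
    intro j hj
    by_contra hne'
    exact absurd (s.min'_le j (Finset.mem_filter.2 ⟨Finset.mem_univ j, hne'⟩)) (not_le.2 hj)
  rcases lt_or_gt_of_ne hine with hlt | hgt
  · exact Or.inl ⟨i, hlow, hlt⟩
  · exact Or.inr ⟨i, fun j hj => (hlow j hj).symm, hgt⟩

lemma lexLT_irrefl {n : ℕ} (α : Fin n →₀ ℕ) : ¬ lexLT α α := by
  rintro ⟨i, -, h⟩; exact lt_irrefl _ h

lemma lexLT_asymm {n : ℕ} {α β : Fin n →₀ ℕ} (h : lexLT α β) : ¬ lexLT β α := by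
  rintro ⟨i2, hl2, hlt2⟩
  obtain ⟨i1, hl1, hlt1⟩ := h
  rcases lt_trichotomy i1 i2 with hc | hc | hc
  · rw [hl2 i1 hc] at hlt1; exact lt_irrefl _ hlt1
  · subst hc; omega
  · rw [hl1 i2 hc] at hlt2; exact lt_irrefl _ hlt2

lemma lexLT_trans {n : ℕ} {α β γ : Fin n →₀ ℕ} (h1 : lexLT α β) (h2 : lexLT β γ) :
    lexLT α γ := by
  obtain ⟨i1, hl1, hlt1⟩ := h1
  obtain ⟨i2, hl2, hlt2⟩ := h2
  rcases lt_trichotomy i1 i2 with hc | hc | hc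
  · exact ⟨i1, fun j hj => (hl1 j hj).trans (hl2 j (hj.trans hc)), by rw [← hl2 i1 hc]; exact hlt1⟩
  · subst hc; exact ⟨i1, fun j hj => (hl1 j hj).trans (hl2 j hj), hlt1.trans hlt2⟩
  · exact ⟨i2, fun j hj => (hl1 j (hj.trans hc)).trans (hl2 j hj), by rw [hl1 i2 hc]; exact hlt2⟩

lemma lexLT_shift {n : ℕ} {α β γ : Fin n →₀ ℕ} (h : lexLT α β) : lexLT (α + γ) (β + γ) := by
  obtain ⟨i, hl, hlt⟩ := h
  exact ⟨i, fun j hj => by simp [Finsupp.add_apply, hl j hj], by simpa [Finsupp.add_apply]⟩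

lemma idxLT_irrefl {n p : ℕ} (a : Idx n p) : ¬ idxLT a a := by
  rintro (h | ⟨-, h | ⟨-, h⟩⟩)
  · exact lt_irrefl _ h
  · exact lt_irrefl _ h
  · exact lexLT_irrefl _ h

lemma idxLT_trans {n p : ℕ} {a b c : Idx n p} (h1 : idxLT a b) (h2 : idxLT b c) :
    idxLT a c := by
  rcases h1 with h1 | ⟨e1, h1⟩ <;> rcases h2 with h2 | ⟨e2, h2⟩
  · exact Or.inl (h1.trans h2)
  · exact Or.inl (e2 ▸ h1)
  · exact Or.inl (e1 ▸ h2)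
  · refine Or.inr ⟨e1.trans e2, ?_⟩
    rcases h1 with h1 | ⟨f1, h1⟩ <;> rcases h2 with h2 | ⟨f2, h2⟩
    · exact Or.inl (h1.trans h2)
    · exact Or.inl (by omega)
    · exact Or.inl (by omega)
    · exact Or.inr ⟨f1.trans f2, lexLT_trans h1 h2⟩

lemma idxLT_asymm {n p : ℕ} {a b : Idx n p} (h : idxLT a b) : ¬ idxLT b a := by
  intro h2
  rcases h with h | ⟨e1, h⟩ <;> rcases h2 with h2 | ⟨e2, h2⟩
  · omega
  · omega
  · omega
  · rcases h with h | ⟨f1, h⟩ <;> rcases h2 with h2 | ⟨f2, h2⟩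
    · omega
    · omega
    · omega
    · exact lexLT_asymm h h2

lemma idxLT_trichot {n p : ℕ} {a b : Idx n p} (h : a ≠ b) : idxLT a b ∨ idxLT b a := by
  rcases Nat.lt_trichotomy (degF a.1) (degF b.1) with hc | hc | hc
  · exact Or.inl (Or.inl hc)
  · rcases Nat.lt_trichotomy (a.2 : ℕ) (b.2 : ℕ) with hj | hj | hj
    · exact Or.inl (Or.inr ⟨hc, Or.inl hj⟩)
    · have hj2 : a.2 = b.2 := Fin.ext hj
      have hne : a.1 ≠ b.1 := by
        intro h1; exact h (Prod.ext h1 hj2)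
      rcases lexLT_trichot hne with hl | hl
      · exact Or.inl (Or.inr ⟨hc, Or.inr ⟨hj2, hl⟩⟩)
      · exact Or.inr (Or.inr ⟨hc.symm, Or.inr ⟨hj2.symm, hl⟩⟩)
    · exact Or.inr (Or.inr ⟨hc.symm, Or.inl hj⟩)
  · exact Or.inr (Or.inl hc)

lemma idxLE_trans {n p : ℕ} {a b c : Idx n p} (h1 : idxLE a b) (h2 : idxLE b c) :
    idxLE a c := by
  rcases h1 with h1 | rfl
  · rcases h2 with h2 | rfl
    · exact Or.inl (idxLT_trans h1 h2)
    · exact Or.inl h1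
  · exact h2

lemma idxLT_of_idxLE_of_ne {n p : ℕ} {a b : Idx n p} (h : idxLE a b) (hne : a ≠ b) :
    idxLT a b := h.resolve_right hne

lemma idxLE_deg {n p : ℕ} {a b : Idx n p} (h : idxLE a b) : degF a.1 ≤ degF b.1 := by
  rcases h with (h | ⟨e, -⟩) | rfl
  · exact h.le
  · omega
  · exact le_refl _

lemma idxLT_shift {n p : ℕ} {a b : Idx n p} (β : Fin n →₀ ℕ) (h : idxLT a b) :
    idxLT (a.1 + β, a.2) (b.1 + β, b.2) := by
  rcases h with h | ⟨e, h | ⟨f, h⟩⟩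
  · exact Or.inl (by simp [degF_add]; omega)
  · exact Or.inr ⟨by simp [degF_add, e], Or.inl h⟩
  · exact Or.inr ⟨by simp [degF_add, e], Or.inr ⟨f, lexLT_shift h⟩⟩

lemma idxLE_shift {n p : ℕ} {a b : Idx n p} (β : Fin n →₀ ℕ) (h : idxLE a b) :
    idxLE (a.1 + β, a.2) (b.1 + β, b.2) := by
  rcases h with h | rfl
  · exact Or.inl (idxLT_shift β h)
  · exact Or.inr rfl

-- finiteness of bounded-degree multiindices
lemma finite_degF_le {n : ℕ} (B : ℕ) : {α : Fin n →₀ ℕ | degF α ≤ B}.Finite := by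
  have : {α : Fin n →₀ ℕ | degF α ≤ B} ⊆
      Set.Iic (Finsupp.equivFunOnFinite.symm fun _ : Fin n => B) := by
    intro α hα
    rw [Set.mem_Iic, Finsupp.le_def]
    intro i
    calc α i ≤ degF α := apply_le_degF α i
    _ ≤ B := hα
  exact (Set.finite_Iic _).subset this

lemma finite_degIdx {n p : ℕ} (B : ℕ) : {x : Idx n p | degF x.1 ≤ B}.Finite := by
  have : {x : Idx n p | degF x.1 ≤ B} ⊆
      (fun y : (Fin n →₀ ℕ) × Fin p => y) '' ({α | degF α ≤ B} ×ˢ Set.univ) := by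
    intro x hx
    exact ⟨x, ⟨hx, Set.mem_univ _⟩, rfl⟩
  exact (((finite_degF_le B).prod (Set.finite_univ)).image _).subset this

lemma exists_minimal_finset {n p : ℕ} (s : Finset (Idx n p)) (hs : s.Nonempty) :
    ∃ d ∈ s, ∀ d' ∈ s, ¬ idxLT d' d := by
  classical
  induction hs using Finset.Nonempty.cons_induction with
  | singleton a => exact ⟨a, Finset.mem_singleton_self a, by
      intro d' hd'
      rw [Finset.mem_singleton] at hd'
      subst hd'
      exact idxLT_irrefl _⟩
  | cons a s ha hs ih =>
    obtain ⟨d, hd, hdmin⟩ := ih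
    by_cases hcase : idxLT a d
    · refine ⟨a, Finset.mem_cons_self a s, ?_⟩
      intro d' hd'
      rcases Finset.mem_cons.1 hd' with rfl | hd's
      · exact idxLT_irrefl _
      · intro hlt
        by_cases hda : d' = d
        · subst hda; exact idxLT_asymm hcase hlt
        · rcases idxLT_trichot hda with h1 | h1
          · exact hdmin d' hd's h1
          · exact idxLT_asymm hcase (idxLT_trans h1 hlt)
    · refine ⟨d, Finset.mem_cons.2 (Or.inr hd), ?_⟩
      intro d' hd'
      rcases Finset.mem_cons.1 hd' with rfl | hd's
      · exact hcase
      · exact hdmin d' hd's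

lemma exists_least {n p : ℕ} (S : Set (Idx n p)) (hS : S.Nonempty) :
    ∃ d ∈ S, ∀ d' ∈ S, idxLE d d' := by
  obtain ⟨x0, hx0⟩ := hS
  set B := degF x0.1
  set S' := {x ∈ S | degF x.1 ≤ B} with hS'
  have hfin : S'.Finite := (finite_degIdx B).subset (fun x hx => hx.2)
  have hne' : hfin.toFinset.Nonempty :=
    ⟨x0, hfin.mem_toFinset.2 ⟨hx0, le_refl _⟩⟩
  obtain ⟨d, hdmem, hdmin⟩ := exists_minimal_finset hfin.toFinset hne'
  have hdS' : d ∈ S' := hfin.mem_toFinset.1 hdmem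
  refine ⟨d, hdS'.1, ?_⟩
  intro d' hd'
  by_cases hdd : d = d'
  · exact Or.inr hdd
  rcases idxLT_trichot hdd with h1 | h1
  · exact Or.inl h1
  · -- d' < d; then degF d'.1 ≤ degF d.1 ≤ B, so d' ∈ S', contradiction with minimality
    exfalso
    have hdeg : degF d'.1 ≤ B := le_trans (idxLE_deg (Or.inl h1)) hdS'.2
    exact hdmin d' (hfin.mem_toFinset.2 ⟨hd', hdeg⟩) h1

-- ===== power series order / ideal power lemmas =====
noncomputable section

open MvPowerSeries

variable {n : ℕ}

abbrev PS (n : ℕ) := MvPowerSeries (Fin n) ℝ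

def ordGE (f : PS n) (k : ℕ) : Prop := ∀ α, degF α < k → MvPowerSeries.coeff α f = 0

def mIdeal (n : ℕ) : Ideal (PS n) :=
  Ideal.span (Set.range (MvPowerSeries.X : Fin n → PS n))

lemma ordGE_mono {f : PS n} {k k' : ℕ} (h : ordGE f k) (hk : k' ≤ k) : ordGE f k' :=
  fun α hα => h α (lt_of_lt_of_le hα hk)

lemma ordGE_zero (k : ℕ) : ordGE (0 : PS n) k := fun α _ => by simp

lemma ordGE_add {f g : PS n} {k : ℕ} (hf : ordGE f k) (hg : ordGE g k) : ordGE (f + g) k :=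
  fun α hα => by simp [map_add, hf α hα, hg α hα]

lemma degF_antidiag {γ : Fin n →₀ ℕ} {x : (Fin n →₀ ℕ) × (Fin n →₀ ℕ)}
    (hx : x ∈ Finset.HasAntidiagonal.antidiagonal γ) : degF x.1 + degF x.2 = degF γ := by
  rw [Finset.HasAntidiagonal.mem_antidiagonal] at hx
  rw [← hx, degF_add]

lemma ordGE_mul_left (g : PS n) {f : PS n} {k : ℕ} (hf : ordGE f k) : ordGE (g * f) k := by
  intro α hα
  classical
  rw [MvPowerSeries.coeff_mul]
  refine Finset.sum_eq_zero fun x hx => ?_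
  have := degF_antidiag hx
  rw [hf x.2 (by omega), mul_zero]

lemma ordGE_mul {f g : PS n} {k l : ℕ} (hf : ordGE f k) (hg : ordGE g l) :
    ordGE (f * g) (k + l) := by
  intro α hα
  classical
  rw [MvPowerSeries.coeff_mul]
  refine Finset.sum_eq_zero fun x hx => ?_
  have := degF_antidiag hx
  by_cases h1 : degF x.1 < k
  · rw [hf x.1 h1, zero_mul]
  · rw [hg x.2 (by omega), mul_zero]

/-- the set of series of order ≥ k is an ideal -/
def Jideal (n k : ℕ) : Ideal (PS n) where
  carrier := {f | ordGE f k}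
  add_mem' := ordGE_add
  zero_mem' := ordGE_zero k
  smul_mem' := fun c f hf => ordGE_mul_left c hf

lemma Ipow_le_J (k : ℕ) : (mIdeal n) ^ k ≤ Jideal n k := by
  induction k with
  | zero =>
    intro f _
    intro α hα
    omega
  | succ k ih =>
    rw [pow_succ]
    refine Ideal.mul_le.2 fun f hf g hg => ?_
    have hfJ : ordGE f k := ih hf
    have hgJ : ordGE g 1 := by
      have : mIdeal n ≤ Jideal n 1 := by
        rw [mIdeal, Ideal.span_le]
        rintro - ⟨s, rfl⟩
        intro α hα
        have hα0 : α = 0 := degF_eq_zero (by omega)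
        subst hα0
        simpa using MvPowerSeries.constantCoeff_X (R := ℝ) s
      exact this hg
    exact ordGE_mul hfJ hgJ

lemma degF_single {s : Fin n} {c : ℕ} : degF (Finsupp.single s c) = c := by
  rw [degF]
  rw [Finset.sum_eq_single s]
  · simp
  · intro b _ hbs; simp [Finsupp.single_apply, Ne.symm hbs]
  · intro h; exact absurd (Finset.mem_univ s) h

lemma single_le_iff_app {α : Fin n →₀ ℕ} {s : Fin n} :
    Finsupp.single s 1 ≤ α ↔ 1 ≤ α s := by
  rw [Finsupp.le_def]
  constructor
  · intro h; simpa using h s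
  · intro h i
    by_cases his : i = s
    · subst his; simpa using h
    · simp [Finsupp.single_apply, his, Ne.symm his]

lemma J_le_Ipow (k : ℕ) {f : PS n} (hf : ordGE f k) : f ∈ (mIdeal n) ^ k := by
  classical
  induction k generalizing f with
  | zero => simp
  | succ k ih =>
    -- decompose f = ∑ s, X s * g s
    set g : Fin n → PS n := fun s =>
      (fun β => if ∀ j, j < s → β j = 0 then f (β + Finsupp.single s 1) else 0 : PS n)
      with hg
    have hcoeffg : ∀ s β, MvPowerSeries.coeff β (g s) =
        if ∀ j, j < s → β j = 0 then MvPowerSeries.coeff (β + Finsupp.single s 1) f else 0 := by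
      intro s β
      rw [MvPowerSeries.coeff_apply, MvPowerSeries.coeff_apply, hg]
    have hgord : ∀ s, ordGE (g s) k := by
      intro s β hβ
      rw [hcoeffg]
      split
      · exact hf _ (by rw [degF_add, degF_single]; omega)
      · rfl
    have hdecomp : f = ∑ s, MvPowerSeries.X s * g s := by
      apply MvPowerSeries.ext
      intro γ
      rw [map_sum]
      by_cases hγ0 : γ = 0
      · subst hγ0
        rw [hf 0 (by simp [degF])]
        symm
        refine Finset.sum_eq_zero fun s _ => ?_
        rw [MvPowerSeries.X_def, MvPowerSeries.coeff_monomial_mul]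
        rw [if_neg]
        intro hle
        have := (single_le_iff_app).1 hle
        simp at this
      · -- γ ≠ 0; let s0 be minimal coordinate with γ s0 ≠ 0
        have hne : (Finset.univ.filter (fun i => γ i ≠ 0)).Nonempty := by
          by_contra hemp
          apply hγ0
          ext i
          by_contra hi
          exact hemp ⟨i, Finset.mem_filter.2 ⟨Finset.mem_univ i, hi⟩⟩
        set s0 := (Finset.univ.filter (fun i => γ i ≠ 0)).min' hne with hs0
        have hs0mem := Finset.min'_mem _ hne
        have hs0ne : γ s0 ≠ 0 := (Finset.mem_filter.1 hs0mem).2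
        have hlow : ∀ j, j < s0 → γ j = 0 := by
          intro j hj
          by_contra hne'
          exact absurd (Finset.min'_le _ j (Finset.mem_filter.2 ⟨Finset.mem_univ j, hne'⟩))
            (not_le.2 hj)
        have hles0 : Finsupp.single s0 1 ≤ γ := single_le_iff_app.2 (by omega)
        rw [Finset.sum_eq_single s0]
        · have hcond : ∀ j, j < s0 → (γ - Finsupp.single s0 1 : Fin n →₀ ℕ) j = 0 := by
            intro j hj
            rw [Finsupp.tsub_apply, hlow j hj]
            simp
          rw [MvPowerSeries.X_def, MvPowerSeries.coeff_monomial_mul,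
            if_pos hles0, one_mul, hcoeffg, if_pos hcond,
            tsub_add_cancel_of_le hles0]
        · intro s _ hss0
          rw [MvPowerSeries.X_def, MvPowerSeries.coeff_monomial_mul]
          rcases lt_or_gt_of_ne hss0 with hlt | hgt
          · rw [if_neg]
            intro hle
            have := single_le_iff_app.1 hle
            rw [hlow s hlt] at this
            omega
          · split
            · have hc : ¬ (∀ j, j < s → (γ - Finsupp.single s 1 : Fin n →₀ ℕ) j = 0) := by
                intro hall
                have := hall s0 hgt
                rw [Finsupp.tsub_apply] at this
                have h2 : Finsupp.single s 1 s0 = 0 := by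
                  simp [Finsupp.single_apply, Fin.ne_of_gt hgt]
                omega
              rw [hcoeffg, if_neg hc, mul_zero]
            · rfl
        · intro hs0notmem
          exact absurd (Finset.mem_univ s0) hs0notmem
      -- end
    rw [hdecomp]
    refine Submodule.sum_mem _ fun s _ => ?_
    rw [pow_succ']
    exact Ideal.mul_mem_mul (Ideal.subset_span ⟨s, rfl⟩) (ih (hgord s))

lemma mem_Ipow_iff {f : PS n} {k : ℕ} : f ∈ (mIdeal n) ^ k ↔ ordGE f k :=
  ⟨fun h => Ipow_le_J k h, J_le_Ipow k⟩

-- smul top membership for pi modules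
lemma mem_smul_top_iff {m : ℕ} {k : ℕ} {F : Fin m → PS n} :
    F ∈ ((mIdeal n) ^ k • (⊤ : Submodule (PS n) (Fin m → PS n))) ↔ ∀ j, F j ∈ (mIdeal n) ^ k := by
  constructor
  · intro h j
    have := Submodule.map_smul'' ((mIdeal n)^k) (⊤ : Submodule (PS n) (Fin m → PS n))
      (LinearMap.proj j)
    have hmem : F j ∈ Submodule.map (LinearMap.proj j : (Fin m → PS n) →ₗ[PS n] PS n)
        ((mIdeal n)^k • ⊤) := ⟨F, h, rfl⟩
    rw [this, Submodule.map_top] at hmem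
    have hrange : LinearMap.range (LinearMap.proj j : (Fin m → PS n) →ₗ[PS n] PS n) = ⊤ := by
      rw [LinearMap.range_eq_top]
      intro x
      exact ⟨fun _ => x, rfl⟩
    rw [hrange] at hmem
    rwa [Ideal.smul_eq_mul, Ideal.mul_top] at hmem
  · intro h
    have : F = ∑ j, (F j) • (Pi.single j 1 : Fin m → PS n) := by
      funext i
      rw [Finset.sum_apply]
      rw [Finset.sum_eq_single i]
      · simp
      · intro b _ hbi
        simp [Pi.single_apply, Ne.symm hbi]
      · intro hi; exact absurd (Finset.mem_univ i) hi
    rw [this]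
    exact Submodule.sum_mem _ fun j _ =>
      Submodule.smul_mem_smul (h j) Submodule.mem_top

end


-- ===== division machinery =====
noncomputable section
open MvPowerSeries

variable {n p q : ℕ}

def mulA (Acols : Fin q → (Fin p → PS n)) (T : Fin q → PS n) : Fin p → PS n :=
  fun j => ∑ i, T i * Acols i j

lemma mulA_sum (Acols : Fin q → (Fin p → PS n)) (T : Fin q → PS n) :
    mulA Acols T = ∑ i, T i • Acols i := by
  funext j
  rw [mulA, Finset.sum_apply]
  rfl

lemma mulA_mem (Acols : Fin q → (Fin p → PS n)) (T : Fin q → PS n) :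
    mulA Acols T ∈ Submodule.span (PS n) (Set.range Acols) := by
  rw [mulA_sum]
  exact Submodule.sum_mem _ fun i _ =>
    Submodule.smul_mem _ _ (Submodule.subset_span ⟨i, rfl⟩)

lemma mulA_add (Acols : Fin q → (Fin p → PS n)) (T T' : Fin q → PS n) :
    mulA Acols (T + T') = mulA Acols T + mulA Acols T' := by
  funext j
  simp [mulA, add_mul, Finset.sum_add_distrib]

lemma mulA_sub (Acols : Fin q → (Fin p → PS n)) (T T' : Fin q → PS n) :
    mulA Acols (T - T') = mulA Acols T - mulA Acols T' := by
  funext j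
  simp [mulA, sub_mul, Finset.sum_sub_distrib]

lemma mulA_zero (Acols : Fin q → (Fin p → PS n)) : mulA Acols 0 = 0 := by
  funext j
  simp [mulA]

-- exp existence
lemma exists_exp {F : Fin p → PS n} {x : Idx n p}
    (hx : x ∈ suppV F) : ∃ d, IsExpOf F d ∧ idxLE d x := by
  obtain ⟨d, hd, hmin⟩ := exists_least (suppV F) ⟨x, hx⟩
  exact ⟨d, ⟨hd, hmin⟩, hmin x hx⟩

-- the cover lemma
lemma cover_lemma {M : Submodule (PS n) (Fin p → PS n)} {t : ℕ} {e : Fin t → Idx n p}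
    (hevert : ∀ d : Idx n p, IsVertex (diagramOf M) d ↔ ∃ i, e i = d)
    (lam : ℕ) (hlam : lam = Finset.univ.sup fun i => degF (e i).1)
    {d : Idx n p} (hd : d ∈ diagramOf M) :
    ∃ v ∈ diagramOf M, v.2 = d.2 ∧ (∃ β, d.1 = v.1 + β) ∧ degF v.1 ≤ lam := by
  classical
  set Sm : Set ℕ :=
    {m | ∃ v ∈ diagramOf M, v.2 = d.2 ∧ (∃ β, d.1 = v.1 + β) ∧ degF v.1 = m} with hSm
  have hne : Sm.Nonempty := ⟨degF d.1, d, hd, rfl, ⟨0, by simp⟩, rfl⟩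
  obtain ⟨v, hv, hv2, hβ, hvdeg⟩ := Nat.sInf_mem hne
  refine ⟨v, hv, hv2, hβ, ?_⟩
  -- v is a vertex
  have hvert : IsVertex (diagramOf M) v := by
    by_contra hnv
    rw [IsVertex, not_not] at hnv
    have hvmem : v ∈ setShift (diagramOf M \ {v}) := by rw [hnv]; exact hv
    obtain ⟨s, hs, β', hβ'⟩ := hvmem
    have hsne : s ≠ v := fun h => hs.2 (by simp [h])
    have hβ'ne : β' ≠ 0 := by
      intro h
      apply hsne
      rw [h] at hβ'
      simp only [add_zero] at hβ'
      rw [hβ']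
    have hdegs : degF s.1 < degF v.1 := by
      have h1 : v.1 = s.1 + β' := by rw [hβ']
      have h2 : degF v.1 = degF s.1 + degF β' := by rw [h1, degF_add]
      have h3 : degF β' ≠ 0 := fun h => hβ'ne (degF_eq_zero h)
      omega
    have hsSm : degF s.1 ∈ Sm := by
      obtain ⟨β, hβ⟩ := hβ
      refine ⟨s, hs.1, ?_, ⟨β' + β, ?_⟩, rfl⟩
      · have h0 : v.2 = s.2 := by rw [hβ']
        rw [← h0]; exact hv2
      · rw [hβ]
        have h1 : v.1 = s.1 + β' := by rw [hβ']
        rw [h1, add_assoc]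
    have := Nat.sInf_le hsSm
    omega
  obtain ⟨i, hi⟩ := (hevert v).1 hvert
  rw [hlam, ← hi]
  exact Finset.le_sup (f := fun i => degF (e i).1) (Finset.mem_univ i)

lemma degF_mono {α β : Fin n →₀ ℕ} (h : α ≤ β) : degF α ≤ degF β := by
  refine Finset.sum_le_sum fun i _ => ?_
  exact Finsupp.le_def.1 h i

-- the single elimination step
lemma step_lemma (Acols : Fin q → (Fin p → PS n)) {t : ℕ} {e : Fin t → Idx n p}
    (hevert : ∀ d : Idx n p,
      IsVertex (diagramOf (Submodule.span (PS n) (Set.range Acols))) d ↔ ∃ i, e i = d)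
    (lam : ℕ) (hlam : lam = Finset.univ.sup fun i => degF (e i).1)
    {F : Fin p → PS n} (hF : F ∈ Submodule.span (PS n) (Set.range Acols))
    (hFne : F ≠ 0) {d : Idx n p} (hd : IsExpOf F d) :
    ∃ T : Fin q → PS n, (∀ k, ordGE (T k) (degF d.1 - lam)) ∧
      (∀ x ∈ suppV (F - mulA Acols T), idxLT d x) := by
  classical
  set M := Submodule.span (PS n) (Set.range Acols) with hM
  have hdN : d ∈ diagramOf M := ⟨F, hF, hFne, hd⟩
  obtain ⟨v, hvN, hv2, ⟨β, hβ⟩, hvdeg⟩ := cover_lemma hevert lam hlam hdN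
  obtain ⟨H, hH, hHne, hHexp⟩ := hvN
  have hHlead : MvPowerSeries.coeff v.1 (H v.2) ≠ 0 := hHexp.1
  set c : ℝ := MvPowerSeries.coeff d.1 (F d.2) / MvPowerSeries.coeff v.1 (H v.2) with hc
  obtain ⟨C, hC⟩ := (Submodule.mem_span_range_iff_exists_fun (PS n)).1 hH
  set T : Fin q → PS n := fun k => (MvPowerSeries.monomial β c) * C k with hT
  have hHj : ∀ j, H j = ∑ i, C i * Acols i j := by
    intro j
    rw [← hC, Finset.sum_apply]
    rfl
  have hmul : mulA Acols T = (MvPowerSeries.monomial β c) • H := by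
    funext j
    show ∑ i, T i * Acols i j = (MvPowerSeries.monomial β c) * H j
    rw [hHj j, Finset.mul_sum]
    exact Finset.sum_congr rfl fun i _ => mul_assoc _ _ _
  have hβled : β ≤ d.1 := by rw [hβ]; exact le_add_self
  have hsubβ : d.1 - β = v.1 := by rw [hβ]; exact add_tsub_cancel_right _ _
  refine ⟨T, ?_, ?_⟩
  · -- order of T
    intro k γ hγ
    show MvPowerSeries.coeff γ ((MvPowerSeries.monomial β c) * C k) = 0
    rw [mul_comm, MvPowerSeries.coeff_mul_monomial]
    rw [if_neg]
    intro hle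
    have h1 : degF β ≤ degF γ := degF_mono hle
    have h2 : degF d.1 = degF v.1 + degF β := by rw [hβ, degF_add]
    omega
  · -- support of remainder
    intro x hx
    have hne : x ≠ d := by
      intro hxd
      subst hxd
      apply hx
      show MvPowerSeries.coeff x.1 ((F - mulA Acols T) x.2) = 0
      rw [Pi.sub_apply, map_sub, hmul]
      have : (MvPowerSeries.monomial β c • H) x.2 = MvPowerSeries.monomial β c * H x.2 := rfl
      have hHx : MvPowerSeries.coeff (x.1 - β) (H x.2) = MvPowerSeries.coeff v.1 (H v.2) := by
        rw [hsubβ, ← hv2]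
      rw [this, MvPowerSeries.coeff_monomial_mul, if_pos hβled, hHx, hc,
        div_mul_cancel₀ _ hHlead, sub_self]
    have hle : idxLE d x := by
      have hcoeff : MvPowerSeries.coeff x.1 (F x.2) ≠ 0 ∨
          MvPowerSeries.coeff x.1 ((mulA Acols T) x.2) ≠ 0 := by
        by_contra hcon
        push_neg at hcon
        apply hx
        show MvPowerSeries.coeff x.1 ((F - mulA Acols T) x.2) = 0
        rw [Pi.sub_apply, map_sub, hcon.1, hcon.2, sub_self]
      rcases hcoeff with h1 | h1
      · exact hd.2 x h1
      · rw [hmul] at h1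
        have h2 : (MvPowerSeries.monomial β c • H) x.2
            = MvPowerSeries.monomial β c * H x.2 := rfl
        rw [h2, MvPowerSeries.coeff_monomial_mul] at h1
        by_cases hβx : β ≤ x.1
        · rw [if_pos hβx] at h1
          have h3 : MvPowerSeries.coeff (x.1 - β) (H x.2) ≠ 0 := by
            intro h; rw [h, mul_zero] at h1; exact h1 rfl
          have h4 : idxLE v (x.1 - β, x.2) := hHexp.2 _ h3
          have h5 : idxLE (v.1 + β, v.2) (x.1 - β + β, x.2) := idxLE_shift β h4
          rw [tsub_add_cancel_of_le hβx] at h5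
          have h6 : (v.1 + β, v.2) = d := by
            rw [← hβ, hv2]
          rw [h6] at h5
          exact h5
        · rw [if_neg hβx] at h1
          exact absurd rfl h1
    exact idxLT_of_idxLE_of_ne hle (Ne.symm hne)

-- full-degree elimination loop
lemma loop_lemma (Acols : Fin q → (Fin p → PS n)) {t : ℕ} {e : Fin t → Idx n p}
    (hevert : ∀ d : Idx n p,
      IsVertex (diagramOf (Submodule.span (PS n) (Set.range Acols))) d ↔ ∃ i, e i = d)
    (lam : ℕ) (hlam : lam = Finset.univ.sup fun i => degF (e i).1) (D : ℕ) :
    ∀ (m : ℕ) (F : Fin p → PS n), F ∈ Submodule.span (PS n) (Set.range Acols) →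
      (∀ j, ordGE (F j) D) →
      Set.ncard {x : Idx n p | degF x.1 = D ∧ ∃ y ∈ suppV F, idxLE y x} ≤ m →
      ∃ T : Fin q → PS n, (∀ k, ordGE (T k) (D - lam)) ∧
        (∀ j, ordGE ((F - mulA Acols T) j) (D + 1)) := by
  intro m
  induction m with
  | zero =>
    intro F hF hord hcard
    refine ⟨0, fun k => ordGE_zero _, ?_⟩
    rw [mulA_zero, sub_zero]
    intro j α hα
    by_contra hco
    have hx : ((α, j) : Idx n p) ∈ suppV F := hco
    have hdeg : degF α = D := by
      have h1 : ¬ degF α < D := fun h => hco (hord j α h)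
      have h2 : degF α < D + 1 := hα
      omega
    have hmem : ((α, j) : Idx n p) ∈
        {x : Idx n p | degF x.1 = D ∧ ∃ y ∈ suppV F, idxLE y x} :=
      ⟨hdeg, (α, j), hx, Or.inr rfl⟩
    have hfin : {x : Idx n p | degF x.1 = D ∧ ∃ y ∈ suppV F, idxLE y x}.Finite :=
      (finite_degIdx D).subset (fun x hx => hx.1.le)
    have := Set.ncard_pos hfin |>.2 ⟨_, hmem⟩
    omega
  | succ m ih =>
    intro F hF hord hcard
    by_cases hfull : ∀ j, ordGE (F j) (D + 1)
    · exact ⟨0, fun k => ordGE_zero _, by rw [mulA_zero, sub_zero]; exact hfull⟩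
    push_neg at hfull
    obtain ⟨j0, hj0⟩ := hfull
    rw [ordGE] at hj0
    push_neg at hj0
    obtain ⟨α0, hα0lt, hα0ne⟩ := hj0
    have hx' : ((α0, j0) : Idx n p) ∈ suppV F := hα0ne
    obtain ⟨d, hdExp, hdle⟩ := exists_exp hx'
    have hFne : F ≠ 0 := by
      intro h
      apply hα0ne
      rw [h]
      simp
    have hx'deg : degF α0 = D := by
      have h1 : ¬ degF α0 < D := fun h => hα0ne (hord j0 α0 h)
      omega
    have hddeg : degF d.1 = D := by
      have h1 : degF d.1 ≤ D := hx'deg ▸ idxLE_deg hdle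
      have h2 : ¬ degF d.1 < D := fun h => hdExp.1 (hord d.2 d.1 h)
      omega
    obtain ⟨T₁, hT₁ord, hT₁supp⟩ := step_lemma Acols hevert lam hlam hF hFne hdExp
    set F' := F - mulA Acols T₁ with hF'def
    have hF' : F' ∈ Submodule.span (PS n) (Set.range Acols) :=
      Submodule.sub_mem _ hF (mulA_mem Acols T₁)
    have hord' : ∀ j, ordGE (F' j) D := by
      intro j α hα
      by_contra hco
      have : idxLT d ((α, j) : Idx n p) := hT₁supp (α, j) hco
      have := idxLE_deg (Or.inl this)
      simp only [] at this
      omega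
    have hsub : {x : Idx n p | degF x.1 = D ∧ ∃ y ∈ suppV F', idxLE y x} ⊆
        {x : Idx n p | degF x.1 = D ∧ ∃ y ∈ suppV F, idxLE y x} \ {d} := by
      rintro x ⟨hxdeg, y, hy, hyx⟩
      have hdy : idxLT d y := hT₁supp y hy
      constructor
      · exact ⟨hxdeg, d, hdExp.1, idxLE_trans (Or.inl hdy) hyx⟩
      · intro hxd
        rw [Set.mem_singleton_iff] at hxd
        subst hxd
        rcases hyx with hyx | rfl
        · exact idxLT_irrefl _ (idxLT_trans hdy hyx)
        · exact idxLT_irrefl _ hdy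
    have hfin : {x : Idx n p | degF x.1 = D ∧ ∃ y ∈ suppV F, idxLE y x}.Finite :=
      (finite_degIdx D).subset (fun x hx => hx.1.le)
    have hdN : d ∈ {x : Idx n p | degF x.1 = D ∧ ∃ y ∈ suppV F, idxLE y x} :=
      ⟨hddeg, d, hdExp.1, Or.inr rfl⟩
    have hcard' : Set.ncard {x : Idx n p | degF x.1 = D ∧ ∃ y ∈ suppV F', idxLE y x} ≤ m := by
      have h1 := Set.ncard_le_ncard hsub (hfin.diff)
      have h2 := Set.ncard_diff_singleton_of_mem hdN
      have h3 := Set.ncard_pos hfin |>.2 ⟨d, hdN⟩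
      omega
    obtain ⟨T₂, hT₂ord, hT₂done⟩ := ih F' hF' hord' hcard'
    refine ⟨T₁ + T₂, fun k => ?_, ?_⟩
    · have h1 : ordGE (T₁ k) (D - lam) := by
        have := hT₁ord k
        rw [hddeg] at this
        exact this
      exact ordGE_add h1 (hT₂ord k)
    · have : F - mulA Acols (T₁ + T₂) = F' - mulA Acols T₂ := by
        rw [mulA_add, hF'def, sub_add_eq_sub_sub]
      rw [this]
      exact hT₂done

end


noncomputable section
open MvPowerSeries

/-- **Chevalley estimate.** With `M = Im A` the module generated by the columns
`A₁,…,A_q` and `λ` the maximum of `|α_i|` over the vertices `(α_i,j_i)` of `𝒩(M)`, every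
`G` with `A·G ∈ 𝔪^{l+λ}·ℝ⟦x⟧ᵖ` lies in `R + 𝔪^l·ℝ⟦x⟧^q`, where `R = Ker A` is the module
of relations among the columns of `A`. -/
theorem stmt8 {n p q t : ℕ} (Acols : Fin q → (Fin p → MvPowerSeries (Fin n) ℝ))
    (e : Fin t → Idx n p) (heinj : Function.Injective e)
    (hevert : ∀ d : Idx n p,
      IsVertex (diagramOf (Submodule.span (MvPowerSeries (Fin n) ℝ) (Set.range Acols))) d ↔
        ∃ i, e i = d)
    (lam : ℕ) (hlam : lam = Finset.univ.sup fun i => degF (e i).1) :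
    ∀ l : ℕ, ∀ G : Fin q → MvPowerSeries (Fin n) ℝ,
      (fun j => ∑ i, G i * Acols i j) ∈
        ((Ideal.span (Set.range (MvPowerSeries.X : Fin n → MvPowerSeries (Fin n) ℝ)))
            ^ (l + lam) •
          (⊤ : Submodule (MvPowerSeries (Fin n) ℝ) (Fin p → MvPowerSeries (Fin n) ℝ))) →
      ∃ W : Fin q → MvPowerSeries (Fin n) ℝ,
        (fun j => ∑ i, W i * Acols i j) = (0 : Fin p → MvPowerSeries (Fin n) ℝ) ∧
        G - W ∈
          ((Ideal.span (Set.range (MvPowerSeries.X : Fin n → MvPowerSeries (Fin n) ℝ))) ^ l •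
            (⊤ : Submodule (MvPowerSeries (Fin n) ℝ)
              (Fin q → MvPowerSeries (Fin n) ℝ))) := by
  intro l G hG
  classical
  set M := Submodule.span (PS n) (Set.range Acols) with hM
  have hG' : mulA Acols G ∈ ((mIdeal n) ^ (l + lam) •
      (⊤ : Submodule (PS n) (Fin p → PS n))) := hG
  have hFord : ∀ j, ordGE (mulA Acols G j) (l + lam) := fun j =>
    mem_Ipow_iff.1 (mem_smul_top_iff.1 hG' j)
  -- the one-stage existential, unconditionally stated so that we may `choose`
  have hstep : ∀ (k : ℕ) (F' : Fin p → PS n), ∃ T : Fin q → PS n,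
      F' ∈ M → (∀ j, ordGE (F' j) (l + lam + k)) →
      ((∀ i, ordGE (T i) (l + k)) ∧
        (∀ j, ordGE ((F' - mulA Acols T) j) (l + lam + k + 1))) := by
    intro k F'
    by_cases h : F' ∈ M ∧ (∀ j, ordGE (F' j) (l + lam + k))
    · obtain ⟨T, hT1, hT2⟩ := loop_lemma Acols hevert lam hlam (l + lam + k)
        (Set.ncard {x : Idx n p | degF x.1 = l + lam + k ∧ ∃ y ∈ suppV F', idxLE y x})
        F' h.1 h.2 le_rfl
      exact ⟨T, fun _ _ => ⟨fun i => ordGE_mono (hT1 i) (by omega), hT2⟩⟩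
    · exact ⟨0, fun hm ho => absurd ⟨hm, ho⟩ h⟩
  choose Tfun hTfun using hstep
  let Fseq : ℕ → (Fin p → PS n) := fun k =>
    Nat.rec (mulA Acols G) (fun k Fk => Fk - mulA Acols (Tfun k Fk)) k
  have hFseq0 : Fseq 0 = mulA Acols G := rfl
  have hFseqS : ∀ k, Fseq (k + 1) = Fseq k - mulA Acols (Tfun k (Fseq k)) := fun k => rfl
  have hInv : ∀ k, Fseq k ∈ M ∧ (∀ j, ordGE (Fseq k j) (l + lam + k)) := by
    intro k
    induction k with
    | zero => exact ⟨mulA_mem _ _, hFord⟩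
    | succ k ih =>
      have h := hTfun k (Fseq k) ih.1 ih.2
      refine ⟨?_, ?_⟩
      · rw [hFseqS]
        exact Submodule.sub_mem _ ih.1 (mulA_mem _ _)
      · rw [hFseqS]
        exact h.2
  set Tk : ℕ → Fin q → PS n := fun k => Tfun k (Fseq k) with hTk
  have hTkord : ∀ k i, ordGE (Tk k i) (l + k) := fun k i =>
    (hTfun k (Fseq k) (hInv k).1 (hInv k).2).1 i
  -- the limit series
  let W' : Fin q → PS n := fun i =>
    (fun γ => ∑ k ∈ Finset.range (degF γ + 1), MvPowerSeries.coeff γ (Tk k i) : PS n)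
  have hW'coeff : ∀ i γ, MvPowerSeries.coeff γ (W' i) =
      ∑ k ∈ Finset.range (degF γ + 1), MvPowerSeries.coeff γ (Tk k i) := fun i γ => rfl
  have hW'ext : ∀ (K : ℕ) (i : Fin q) (γ : Fin n →₀ ℕ), degF γ + 1 ≤ K →
      MvPowerSeries.coeff γ (W' i) = ∑ k ∈ Finset.range K, MvPowerSeries.coeff γ (Tk k i) := by
    intro K i γ hK
    rw [hW'coeff]
    refine Finset.sum_subset (Finset.range_subset_range.2 hK) ?_
    intro k hk hknot
    rw [Finset.mem_range] at hk hknot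
    exact hTkord k i γ (by omega)
  have hW'ord : ∀ i, ordGE (W' i) l := by
    intro i γ hγ
    rw [hW'coeff]
    exact Finset.sum_eq_zero fun k _ => hTkord k i γ (by omega)
  -- telescoping
  have htel : ∀ (K : ℕ) (j : Fin p) (γ : Fin n →₀ ℕ),
      MvPowerSeries.coeff γ (Fseq K j) = MvPowerSeries.coeff γ (mulA Acols G j) -
        ∑ k ∈ Finset.range K, MvPowerSeries.coeff γ (mulA Acols (Tk k) j) := by
    intro K j γ
    induction K with
    | zero => simp [hFseq0]
    | succ K ih =>
      rw [hFseqS, Pi.sub_apply, map_sub, ih, Finset.sum_range_succ]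
      ring
  -- the main identity
  have hmain : mulA Acols W' = mulA Acols G := by
    funext j
    apply MvPowerSeries.ext
    intro γ
    set K := degF γ + 1 with hKdef
    have h1 : MvPowerSeries.coeff γ (mulA Acols W' j) =
        ∑ k ∈ Finset.range K, MvPowerSeries.coeff γ (mulA Acols (Tk k) j) := by
      calc MvPowerSeries.coeff γ (mulA Acols W' j)
          = ∑ i, ∑ x ∈ Finset.HasAntidiagonal.antidiagonal γ,
              MvPowerSeries.coeff x.1 (W' i) * MvPowerSeries.coeff x.2 (Acols i j) := by
            show MvPowerSeries.coeff γ (∑ i, W' i * Acols i j) = _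
            rw [map_sum]
            exact Finset.sum_congr rfl fun i _ => MvPowerSeries.coeff_mul _ _ _
        _ = ∑ i, ∑ x ∈ Finset.HasAntidiagonal.antidiagonal γ, ∑ k ∈ Finset.range K,
              MvPowerSeries.coeff x.1 (Tk k i) * MvPowerSeries.coeff x.2 (Acols i j) := by
            refine Finset.sum_congr rfl fun i _ => Finset.sum_congr rfl fun x hx => ?_
            rw [hW'ext K i x.1 (by have := degF_antidiag hx; omega), Finset.sum_mul]
        _ = ∑ i, ∑ k ∈ Finset.range K, ∑ x ∈ Finset.HasAntidiagonal.antidiagonal γ,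
              MvPowerSeries.coeff x.1 (Tk k i) * MvPowerSeries.coeff x.2 (Acols i j) :=
            Finset.sum_congr rfl fun i _ => Finset.sum_comm
        _ = ∑ k ∈ Finset.range K, ∑ i, ∑ x ∈ Finset.HasAntidiagonal.antidiagonal γ,
              MvPowerSeries.coeff x.1 (Tk k i) * MvPowerSeries.coeff x.2 (Acols i j) :=
            Finset.sum_comm
        _ = ∑ k ∈ Finset.range K, MvPowerSeries.coeff γ (mulA Acols (Tk k) j) := by
            refine Finset.sum_congr rfl fun k _ => ?_
            show _ = MvPowerSeries.coeff γ (∑ i, Tk k i * Acols i j)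
            rw [map_sum]
            exact Finset.sum_congr rfl fun i _ => (MvPowerSeries.coeff_mul _ _ _).symm
    have h2 : MvPowerSeries.coeff γ (Fseq K j) = 0 := (hInv K).2 j γ (by omega)
    have h3 := htel K j γ
    rw [h1]
    linarith
  refine ⟨G - W', ?_, ?_⟩
  · show mulA Acols (G - W') = 0
    rw [mulA_sub, hmain, sub_self]
  · have h4 : G - (G - W') = W' := sub_sub_cancel _ _
    rw [h4]
    show W' ∈ ((mIdeal n) ^ l • (⊤ : Submodule (PS n) (Fin q → PS n)))
    exact mem_smul_top_iff.2 fun i => mem_Ipow_iff.2 (hW'ord i)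

end
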